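/- Let X be a finite-dimensional real normed space and let y be a flat unit vector, i.e., there is a hyperplane H through the origin such that (y + H) ∩ S is a neighbourhood of y in the unit sphere S. Then for every unit vector x there exists a contractive automorphism T of X with T x = y. -/

import Mathlib

set_option maxHeartbeats 1000000 in
/-- If `y` is a flat unit vector (there is a linear hyperplane `H = ker φ` such that
`(y + H) ∩ S` is a relative neighbourhood of `y` in the unit sphere `S`), then every unit
vector can be sent to `y` by a contractive automorphism. -/
theorem stmt10 (X : Type*) [NormedAddCommGroup X] [NormedSpace ℝ X] [FiniteDimensional ℝ X]
    (y : X) (hy : ‖y‖ = 1) (φ : X →ₗ[ℝ] ℝ) (hφ : φ ≠ 0)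
    (hflat : {z : X | z - y ∈ LinearMap.ker φ} ∈ nhdsWithin y (Metric.sphere (0 : X) 1)) :
    ∀ x : X, ‖x‖ = 1 → ∃ T : X ≃L[ℝ] X, ‖(T : X →L[ℝ] X)‖ ≤ 1 ∧ T x = y := by
  classical
  obtain ⟨ε₀, hε₀, hball⟩ := Metric.mem_nhdsWithin_iff.mp hflat
  -- Core consequence of flatness: for small u, φ(y+u) = φ(y)‖y+u‖.
  have core : ∀ u : X, ‖u‖ < ε₀ / 2 → ‖u‖ < 1 / 2 → φ (y + u) = φ y * ‖y + u‖ := by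
    intro u hu1 hu2
    have hyu : (1 : ℝ) - ‖u‖ ≤ ‖y + u‖ := by
      have h1 : ‖y‖ ≤ ‖y + u‖ + ‖u‖ := by
        have he : y = (y + u) - u := by abel
        calc ‖y‖ = ‖(y + u) - u‖ := by rw [← he]
          _ ≤ ‖y + u‖ + ‖u‖ := norm_sub_le _ _
      rw [hy] at h1
      linarith
    have hpos : (0 : ℝ) < ‖y + u‖ := by linarith
    set z : X := ‖y + u‖⁻¹ • (y + u) with hz
    have hzs : z ∈ Metric.sphere (0 : X) 1 := by
      rw [mem_sphere_iff_norm, sub_zero, hz, norm_smul, norm_inv, norm_norm,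
        inv_mul_cancel₀ hpos.ne']
    have hzy : dist z y < ε₀ := by
      have h2 : ‖z - (y + u)‖ = |1 - ‖y + u‖| := by
        have : z - (y + u) = (‖y + u‖⁻¹ - 1) • (y + u) := by
          rw [hz]; module
        rw [this, norm_smul, Real.norm_eq_abs]
        rw [show ‖y + u‖⁻¹ - 1 = (1 - ‖y + u‖) * ‖y + u‖⁻¹ by field_simp]
        rw [abs_mul, abs_inv, abs_of_pos hpos, mul_assoc, inv_mul_cancel₀ hpos.ne',
          mul_one]
      have h3 : |1 - ‖y + u‖| ≤ ‖u‖ := by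
        have := abs_norm_sub_norm_le (y + u) y
        rw [add_sub_cancel_left, hy] at this
        rw [abs_sub_comm]; exact this
      have h4 : ‖z - y‖ ≤ ‖z - (y + u)‖ + ‖u‖ := by
        have he : z - y = (z - (y + u)) + u := by abel
        rw [he]
        exact norm_add_le _ _
      rw [dist_eq_norm]
      calc ‖z - y‖ ≤ |1 - ‖y + u‖| + ‖u‖ := by rw [← h2]; exact h4
        _ ≤ ‖u‖ + ‖u‖ := by linarith
        _ < ε₀ := by linarith
    have hmem : z ∈ {z : X | z - y ∈ LinearMap.ker φ} :=
      hball ⟨Metric.mem_ball.mpr hzy, hzs⟩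
    have hz0 : φ z = φ y := by
      have := LinearMap.mem_ker.mp hmem
      rw [map_sub] at this; linarith
    have : ‖y + u‖⁻¹ * φ (y + u) = φ y := by
      rw [hz, map_smul] at hz0; exact hz0
    field_simp at this
    rw [map_add]
    linarith [this, map_add φ y u, mul_comm (φ y) ‖y + u‖]
  -- φ y ≠ 0
  have hφy : φ y ≠ 0 := by
    intro h0
    apply hφ
    ext v
    simp only [LinearMap.zero_apply]
    set d : ℝ := min (ε₀ / 8) 8⁻¹ with hd
    have hd0 : 0 < d := by positivity
    set t : ℝ := d / (‖v‖ + 1) with ht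
    have ht0 : 0 < t := by positivity
    have htv : t * ‖v‖ ≤ d := by
      rw [ht, div_mul_eq_mul_div, div_le_iff₀ (by positivity)]
      nlinarith [norm_nonneg v]
    have h1 : ‖t • v‖ < ε₀ / 2 := by
      rw [norm_smul, Real.norm_eq_abs, abs_of_pos ht0]
      have : d ≤ ε₀ / 8 := min_le_left _ _
      linarith
    have h2 : ‖t • v‖ < 1 / 2 := by
      rw [norm_smul, Real.norm_eq_abs, abs_of_pos ht0]
      have : d ≤ 8⁻¹ := min_le_right _ _
      norm_num at this ⊢
      linarith
    have := core (t • v) h1 h2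
    rw [map_add, map_smul, h0, smul_eq_mul, zero_mul, zero_add] at this
    exact (mul_eq_zero.mp this).resolve_left ht0.ne'
  -- flatness: for w ∈ ker φ small, ‖y + w‖ = 1
  set ε' : ℝ := min (ε₀ / 4) 4⁻¹ with hε'
  have hε'0 : 0 < ε' := by positivity
  have flat : ∀ w : X, φ w = 0 → ‖w‖ ≤ ε' → ‖y + w‖ = 1 := by
    intro w hw hwε
    have h1 : ‖w‖ < ε₀ / 2 := by
      have : ε' ≤ ε₀ / 4 := min_le_left _ _
      linarith
    have h2 : ‖w‖ < 1 / 2 := by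
      have : ε' ≤ 4⁻¹ := min_le_right _ _
      norm_num at this
      linarith
    have := core w h1 h2
    rw [map_add, hw, add_zero] at this
    have := mul_left_cancel₀ hφy (by rw [← this, mul_one] : φ y * 1 = φ y * ‖y + w‖)
    linarith
  -- convexity bound
  have keyhalf : ∀ (a : ℝ) (w : X), 0 ≤ a → a ≤ 1 → ‖y + w‖ ≤ 1 → ‖w‖ ≤ 1 →
      ‖a • y + w‖ ≤ 1 := by
    intro a w ha0 ha1 hyw hw
    have hrw : a • y + w = a • (y + w) + (1 - a) • w := by module
    rw [hrw]
    calc ‖a • (y + w) + (1 - a) • w‖ ≤ ‖a • (y + w)‖ + ‖(1 - a) • w‖ := norm_add_le _ _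
      _ = a * ‖y + w‖ + (1 - a) * ‖w‖ := by
          rw [norm_smul, norm_smul, Real.norm_eq_abs, Real.norm_eq_abs,
            abs_of_nonneg ha0, abs_of_nonneg (by linarith)]
      _ ≤ a * 1 + (1 - a) * 1 := by
          gcongr <;> linarith
      _ = 1 := by ring
  have key : ∀ (a : ℝ) (w : X), |a| ≤ 1 → ‖y + w‖ ≤ 1 → ‖y + (-w)‖ ≤ 1 → ‖w‖ ≤ 1 →
      ‖a • y + w‖ ≤ 1 := by
    intro a w ha hyw hyw' hw
    rcases le_or_gt 0 a with h | h
    · exact keyhalf a w h (le_trans (le_abs_self a) ha) hyw hw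
    · have : ‖a • y + w‖ = ‖(-a) • y + (-w)‖ := by
        rw [← norm_neg]; congr 1; module
      rw [this]
      exact keyhalf (-a) (-w) (by linarith) (le_trans (neg_le_abs a) ha) hyw'
        (by rw [norm_neg]; exact hw)
  -- supporting functional at x
  intro x hx
  have hx0 : x ≠ 0 := fun h => by simp [h] at hx
  obtain ⟨g, hg1, hgx⟩ := exists_dual_vector ℝ x (norm_ne_zero_iff.mpr hx0)
  rw [hx] at hgx
  set gl : X →ₗ[ℝ] ℝ := g.toLinearMap with hgl
  have hglx : gl x = 1 := hgx
  -- normalized f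
  set f : X →ₗ[ℝ] ℝ := (φ y)⁻¹ • φ with hf
  have hfy : f y = 1 := by
    simp [hf, inv_mul_cancel₀ hφy]
  have hfker : ∀ v : X, f v = 0 ↔ φ v = 0 := by
    intro v
    simp only [hf, LinearMap.smul_apply, smul_eq_mul]
    constructor
    · intro h
      rcases mul_eq_zero.mp h with h | h
      · exact absurd h (inv_ne_zero hφy)
      · exact h
    · intro h; rw [h, mul_zero]
  -- rank computation
  have hrank : Module.finrank ℝ (LinearMap.ker gl) = Module.finrank ℝ (LinearMap.ker f) := by
    have hsur1 : LinearMap.range gl = ⊤ := by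
      rw [LinearMap.range_eq_top]
      intro r
      exact ⟨r • x, by rw [map_smul, hglx, smul_eq_mul, mul_one]⟩
    have hsur2 : LinearMap.range f = ⊤ := by
      rw [LinearMap.range_eq_top]
      intro r
      exact ⟨r • y, by rw [map_smul, hfy, smul_eq_mul, mul_one]⟩
    have e1 := LinearMap.finrank_range_add_finrank_ker gl
    have e2 := LinearMap.finrank_range_add_finrank_ker f
    rw [hsur1] at e1
    rw [hsur2] at e2
    omega
  obtain ⟨S⟩ : Nonempty ((LinearMap.ker gl) ≃ₗ[ℝ] (LinearMap.ker f)) :=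
    ⟨LinearEquiv.ofFinrankEq _ _ hrank⟩
  -- projections
  have hpmem : ∀ z : X, z - gl z • x ∈ LinearMap.ker gl := by
    intro z
    rw [LinearMap.mem_ker, map_sub, map_smul, smul_eq_mul, hglx, mul_one, sub_self]
  have hqmem : ∀ z : X, z - f z • y ∈ LinearMap.ker f := by
    intro z
    rw [LinearMap.mem_ker, map_sub, map_smul, smul_eq_mul, hfy, mul_one, sub_self]
  set p : X →ₗ[ℝ] (LinearMap.ker gl) :=
    LinearMap.codRestrict _ (LinearMap.id - LinearMap.smulRight gl x)
      (fun z => by simpa using hpmem z) with hp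
  set q : X →ₗ[ℝ] (LinearMap.ker f) :=
    LinearMap.codRestrict _ (LinearMap.id - LinearMap.smulRight f y)
      (fun z => by simpa using hqmem z) with hq
  have hpval : ∀ z : X, ((p z : X)) = z - gl z • x := fun z => rfl
  have hqval : ∀ z : X, ((q z : X)) = z - f z • y := fun z => rfl
  -- the bounded piece
  set M : X →ₗ[ℝ] X :=
    (LinearMap.ker f).subtype ∘ₗ S.toLinearMap ∘ₗ p with hM
  have hMval : ∀ z : X, M z = ((S (p z) : X)) := fun z => rfl
  obtain ⟨C, hC0, hMle⟩ : ∃ C : ℝ, 0 ≤ C ∧ ∀ z : X, ‖M z‖ ≤ C * ‖z‖ := by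
    refine ⟨‖LinearMap.toContinuousLinearMap M‖, norm_nonneg _, fun z => ?_⟩
    have := (LinearMap.toContinuousLinearMap M).le_opNorm z
    simpa using this
  obtain ⟨δ, hδ0, hδC⟩ : ∃ δ : ℝ, 0 < δ ∧ δ * C ≤ ε' := by
    refine ⟨ε' / (C + 1), by positivity, ?_⟩
    rw [div_mul_eq_mul_div, div_le_iff₀ (by positivity)]
    nlinarith
  -- forward and backward maps
  set F : X →ₗ[ℝ] X := LinearMap.smulRight gl y + δ • M with hF
  set N : X →ₗ[ℝ] X :=
    (LinearMap.ker gl).subtype ∘ₗ S.symm.toLinearMap ∘ₗ q with hN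
  set G : X →ₗ[ℝ] X := LinearMap.smulRight f x + δ⁻¹ • N with hG
  have hFval : ∀ z : X, F z = gl z • y + δ • ((S (p z) : X)) := fun z => rfl
  have hGval : ∀ z : X, G z = f z • x + δ⁻¹ • ((S.symm (q z) : X)) := fun z => rfl
  -- kernel facts
  have hglS : ∀ v : LinearMap.ker gl, gl (v : X) = 0 := fun v => v.2
  have hfS : ∀ v : LinearMap.ker f, f (v : X) = 0 := fun v => v.2
  -- F ∘ G = id
  have hFG : F.comp G = LinearMap.id := by
    ext z
    simp only [LinearMap.comp_apply, LinearMap.id_apply]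
    have h1 : gl (G z) = f z := by
      rw [hGval, map_add, map_smul, map_smul, hglx, hglS (S.symm (q z))]
      simp
    have h2 : p (G z) = δ⁻¹ • S.symm (q z) := by
      apply Subtype.ext
      rw [hpval, h1, hGval]
      simp [Submodule.coe_smul]
    rw [hFval, h1, h2, map_smul, Submodule.coe_smul, smul_smul,
      mul_inv_cancel₀ hδ0.ne', one_smul, S.apply_symm_apply, hqval]
    abel
  -- G ∘ F = id
  have hGF : G.comp F = LinearMap.id := by
    ext z
    simp only [LinearMap.comp_apply, LinearMap.id_apply]
    have h1 : f (F z) = gl z := by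
      rw [hFval, map_add, map_smul, map_smul, hfy, hfS (S (p z))]
      simp
    have h2 : q (F z) = δ • S (p z) := by
      apply Subtype.ext
      rw [hqval, h1, hFval]
      simp [Submodule.coe_smul]
    rw [hGval, h1, h2, map_smul, S.symm_apply_apply, Submodule.coe_smul, smul_smul,
      inv_mul_cancel₀ hδ0.ne', one_smul, hpval]
    abel
  set E : X ≃ₗ[ℝ] X := LinearEquiv.ofLinear F G hFG hGF with hE
  set T : X ≃L[ℝ] X := E.toContinuousLinearEquiv with hT
  have hTapp : ∀ z : X, T z = F z := fun z => rfl
  refine ⟨T, ?_, ?_⟩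
  · -- contractivity
    have unit : ∀ u : X, ‖u‖ = 1 → ‖F u‖ ≤ 1 := by
      intro u hu
      rw [hFval]
      have haw : |gl u| ≤ 1 := by
        have := g.le_opNorm u
        rw [hg1, hu, one_mul] at this
        simpa [hgl] using this
      set w : X := δ • ((S (p u) : X)) with hw
      have hwker : φ w = 0 := by
        have h1 : f ((S (p u) : X)) = 0 := hfS (S (p u))
        have h2 : φ ((S (p u) : X)) = 0 := (hfker _).mp h1
        rw [hw, map_smul, h2, smul_zero]
      have hwnorm : ‖w‖ ≤ ε' := by
        rw [hw, norm_smul, Real.norm_eq_abs, abs_of_pos hδ0]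
        have := hMle u
        rw [hMval, hu, mul_one] at this
        calc δ * ‖(S (p u) : X)‖ ≤ δ * C := by
              exact mul_le_mul_of_nonneg_left this hδ0.le
          _ ≤ ε' := hδC
      have hw1 : ‖w‖ ≤ 1 := by
        have : ε' ≤ 4⁻¹ := min_le_right _ _
        linarith
      refine key (gl u) w haw ?_ ?_ hw1
      · exact le_of_eq (flat w hwker hwnorm)
      · refine le_of_eq (flat (-w) ?_ ?_)
        · rw [map_neg, hwker, neg_zero]
        · rw [norm_neg]; exact hwnorm
    apply ContinuousLinearMap.opNorm_le_bound _ zero_le_one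
    intro z
    rw [one_mul]
    rcases eq_or_ne z 0 with rfl | hz
    · simp [hTapp]
    · have hzpos : (0 : ℝ) < ‖z‖ := norm_pos_iff.mpr hz
      have hu : ‖(‖z‖⁻¹ • z)‖ = 1 := by
        rw [norm_smul, Real.norm_eq_abs, abs_inv, abs_of_pos hzpos,
          inv_mul_cancel₀ hzpos.ne']
      have h1 := unit (‖z‖⁻¹ • z) hu
      rw [map_smul, norm_smul, Real.norm_eq_abs, abs_inv, abs_of_pos hzpos] at h1
      have h2 : ‖F z‖ ≤ ‖z‖ := by
        rw [inv_mul_le_iff₀ hzpos] at h1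
        linarith [h1]
      calc ‖(T : X →L[ℝ] X) z‖ = ‖F z‖ := by rw [show (T : X →L[ℝ] X) z = T z from rfl, hTapp]
        _ ≤ ‖z‖ := h2
  · -- T x = y
    rw [hTapp, hFval]
    have hpx : p x = 0 := by
      apply Subtype.ext
      rw [hpval, hglx, one_smul, sub_self]
      rfl
    rw [hpx, map_zero]
    simp [hglx]
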